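/- Let (Ω,ρ) be a metric space, β ∈ (0,1], A ⊆ Ω a nonempty finite set, and f: Ω → [0,1] such that f(u) ≠ f(v) for some u,v ∈ A. Define F: Ω → [0,1] by F = f on A and, for each y ∈ Ω∖A, F(y) := f(u*_y) + R_y(u*_y,v*_y)·ρ(y,u*_y)^β, where (u*_y,v*_y) ∈ A×A is a maximizer of R_y(u,v) := (f(v)−f(u))/(ρ(y,v)^β+ρ(y,u)^β) over A×A. Then for every x ∈ A one has Λ_F^β(x, Ω) = Λ_F^β(x, A) ≤ Λ_f^β(x, Ω). -/

import Mathlib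

open MeasureTheory Set Metric
open scoped ENNReal NNReal

noncomputable section

/-- The `β`-hslope of `f` at `x`: `Λ_f^β(x) = sup_{y ≠ x} |f x - f y| / ρ(x,y)^β`. -/
def hslope {Ω : Type*} [MetricSpace Ω] (β : ℝ) (f : Ω → ℝ) (x : Ω) : ℝ≥0∞ :=
  ⨆ (y : Ω) (_ : y ≠ x), ENNReal.ofReal (|f x - f y| / dist x y ^ β)

/-- The average `β`-hslope of `f` with respect to `μ`: `E_{X∼μ}[Λ_f^β(X)]`. -/
def avgSlope {Ω : Type*} [MetricSpace Ω] [MeasurableSpace Ω] (μ : Measure Ω) (β : ℝ)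
    (f : Ω → ℝ) : ℝ≥0∞ :=
  ∫⁻ x, hslope β f x ∂μ

/-- The weak average `β`-hslope of `f` with respect to `μ`:
`sup_{t>0} t · μ {x : Λ_f^β(x) ≥ t}`. -/
def weakAvgSlope {Ω : Type*} [MetricSpace Ω] [MeasurableSpace Ω] (μ : Measure Ω) (β : ℝ)
    (f : Ω → ℝ) : ℝ≥0∞ :=
  ⨆ (t : ℝ) (_ : 0 < t), ENNReal.ofReal t * μ {x | ENNReal.ofReal t ≤ hslope β f x}

/-- The class `H̄öl^β_L(Ω,μ)` of measurable `[0,1]`-valued functions with average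
`β`-hslope at most `L`. -/
def avgHolderClass {Ω : Type*} [MetricSpace Ω] [MeasurableSpace Ω] (μ : Measure Ω)
    (β L : ℝ) : Set (Ω → ℝ) :=
  {f | Measurable f ∧ (∀ x, f x ∈ Icc (0:ℝ) 1) ∧ avgSlope μ β f ≤ ENNReal.ofReal L}

/-- The class `H̃öl^β_L(Ω,μ)` of measurable `[0,1]`-valued functions with weak average
`β`-hslope at most `L`. -/
def weakHolderClass {Ω : Type*} [MetricSpace Ω] [MeasurableSpace Ω] (μ : Measure Ω)
    (β L : ℝ) : Set (Ω → ℝ) :=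
  {f | Measurable f ∧ (∀ x, f x ∈ Icc (0:ℝ) 1) ∧ weakAvgSlope μ β f ≤ ENNReal.ofReal L}

/-- The covering number `N_Ω(t)`: minimal cardinality of a set of points whose closed
`t`-balls cover `Ω` (`∞` if no finite cover exists). -/
def coveringNumber (Ω : Type*) [MetricSpace Ω] (t : ℝ) : ℝ≥0∞ :=
  ⨅ (A : Finset Ω) (_ : ∀ x : Ω, ∃ a ∈ A, dist x a ≤ t), (A.card : ℝ≥0∞)

/-- `B` is a finite set of `ε`-brackets (with respect to `L1(μ)`) covering `F`. -/
def IsBracketing {Ω : Type*} [MeasurableSpace Ω] (μ : Measure Ω) (F : Set (Ω → ℝ))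
    (ε : ℝ) (B : Finset ((Ω → ℝ) × (Ω → ℝ))) : Prop :=
  (∀ lu ∈ B, (∀ x, lu.1 x ∈ Icc (0:ℝ) 1 ∧ lu.2 x ∈ Icc (0:ℝ) 1) ∧
      ∫⁻ x, ENNReal.ofReal |lu.2 x - lu.1 x| ∂μ ≤ ENNReal.ofReal ε) ∧
    ∀ f ∈ F, ∃ lu ∈ B, ∀ x, lu.1 x ≤ f x ∧ f x ≤ lu.2 x

/-- The bracketing number `N_[](F, L1(μ), ε)`. -/
def bracketingNumber {Ω : Type*} [MetricSpace Ω] [MeasurableSpace Ω] (F : Set (Ω → ℝ))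
    (μ : Measure Ω) (ε : ℝ) : ℝ≥0∞ :=
  ⨅ (B : Finset ((Ω → ℝ) × (Ω → ℝ))) (_ : IsBracketing μ F ε B), (B.card : ℝ≥0∞)

/-- Logarithm of an extended-real cardinality: equals `log N` for finite natural `N`
and `∞` when `N = ∞`. -/
def elog (N : ℝ≥0∞) : ℝ≥0∞ :=
  ⨅ (m : ℕ) (_ : N ≤ (m : ℝ≥0∞)), ENNReal.ofReal (Real.log m)

/-- The `L1` risk `L_D(f) = E_{(X,Y)∼D} |f(X) − Y|`. -/
def risk {Ω : Type*} [MetricSpace Ω] [MeasurableSpace Ω] (D : Measure (Ω × ℝ))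
    (f : Ω → ℝ) : ℝ≥0∞ :=
  ∫⁻ p, ENNReal.ofReal |f p.1 - p.2| ∂D

/-- The empirical `L1` risk `L_S(f) = (1/n) Σ_i |f(X_i) − Y_i|`. -/
def empRisk {Ω : Type*} [MetricSpace Ω] {n : ℕ} (S : Fin n → Ω × ℝ) (f : Ω → ℝ) : ℝ :=
  (n : ℝ)⁻¹ * ∑ i, |f (S i).1 - (S i).2|

/-- `D` is realizable by the class `F`. -/
def Realizable {Ω : Type*} [MetricSpace Ω] [MeasurableSpace Ω] (D : Measure (Ω × ℝ))
    (F : Set (Ω → ℝ)) : Prop :=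
  ∃ f ∈ F, risk D f = 0

/-- The empirical average `β`-hslope of `f` over the sample points `X_1,…,X_n`. -/
def empAvgSlope {Ω : Type*} [MetricSpace Ω] (β : ℝ) {n : ℕ} (X : Fin n → Ω)
    (f : Ω → ℝ) : ℝ :=
  (n : ℝ)⁻¹ * ∑ i, ⨆ (j : Fin n) (_ : X j ≠ X i), |f (X i) - f (X j)| / dist (X i) (X j) ^ β


/-- The restricted `β`-slope of `g` at `x` over the set `B`. -/
def hslopeOn {Ω : Type*} [MetricSpace Ω] (β : ℝ) (g : Ω → ℝ) (x : Ω) (B : Set Ω) : ℝ≥0∞ :=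
  ⨆ (y : Ω) (_ : y ∈ B) (_ : y ≠ x), ENNReal.ofReal (|g x - g y| / dist x y ^ β)

/-- `R_x(u,v) = (f v − f u) / (ρ(x,v)^β + ρ(x,u)^β)`. -/
def pmseR {Ω : Type*} [MetricSpace Ω] (β : ℝ) (f : Ω → ℝ) (x u v : Ω) : ℝ :=
  (f v - f u) / (dist x v ^ β + dist x u ^ β)

private lemma my_rpow_add_le {a b p : ℝ} (ha : 0 ≤ a) (hb : 0 ≤ b) (hp : 0 ≤ p) (hp1 : p ≤ 1) :
    (a + b) ^ p ≤ a ^ p + b ^ p := by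
  lift a to ℝ≥0 using ha
  lift b to ℝ≥0 using hb
  have := NNReal.rpow_add_le_add_rpow a b hp hp1
  exact_mod_cast this

private lemma pmse_key {Ω : Type*} [MetricSpace Ω] {β : ℝ} (hβ0 : 0 < β) (hβ1 : β ≤ 1)
    {A : Finset Ω} {f : Ω → ℝ} {ustar vstar : Ω → Ω}
    (hu : ∀ y, y ∉ A → ustar y ∈ A) (hv : ∀ y, y ∉ A → vstar y ∈ A)
    (hmax : ∀ y, y ∉ A → ∀ u ∈ A, ∀ v ∈ A, pmseR β f y u v ≤ pmseR β f y (ustar y) (vstar y))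
    {F : Ω → ℝ} (hFA : ∀ a ∈ A, F a = f a)
    (hFx : ∀ y, y ∉ A →
      F y = f (ustar y) + pmseR β f y (ustar y) (vstar y) * dist y (ustar y) ^ β)
    {x y : Ω} (hxA : x ∈ A) (hyA : y ∉ A) :
    F y = F x ∨ ∃ a ∈ A, a ≠ x ∧
      |F x - F y| / dist x y ^ β ≤ |F x - F a| / dist x a ^ β := by
  obtain ⟨u, v, huA, hvA, hmaxy, hFy⟩ : ∃ u v, u ∈ A ∧ v ∈ A ∧
      (∀ a ∈ A, ∀ b ∈ A, pmseR β f y a b ≤ pmseR β f y u v) ∧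
      F y = f u + pmseR β f y u v * dist y u ^ β :=
    ⟨ustar y, vstar y, hu y hyA, hv y hyA, fun a ha b hb => hmax y hyA a ha b hb, hFx y hyA⟩
  set R := pmseR β f y u v with hR
  have hyx : y ≠ x := fun h => hyA (h ▸ hxA)
  have hyu : y ≠ u := fun h => hyA (h ▸ huA)
  have hyv : y ≠ v := fun h => hyA (h ▸ hvA)
  have hd1 : 0 < dist x y ^ β := Real.rpow_pos_of_pos (dist_pos.2 (Ne.symm hyx)) β
  have hd1' : 0 < dist y x ^ β := Real.rpow_pos_of_pos (dist_pos.2 hyx) β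
  have hd2u : 0 < dist y u ^ β := Real.rpow_pos_of_pos (dist_pos.2 hyu) β
  have hd2v : 0 < dist y v ^ β := Real.rpow_pos_of_pos (dist_pos.2 hyv) β
  have hFxx : F x = f x := hFA x hxA
  have hden : (0:ℝ) < dist y v ^ β + dist y u ^ β := by linarith
  have hRden : f v - f u = R * (dist y v ^ β + dist y u ^ β) := by
    rw [hR, pmseR, div_mul_cancel₀ _ hden.ne']
  have h2 : F y - f u = R * dist y u ^ β := by rw [hFy]; ring
  have h1 : f v - F y = R * dist y v ^ β := by
    rw [mul_add] at hRden; rw [hFy]; linarith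
  rcases le_total (f x) (F y) with hc | hc
  · -- F y ≥ f x : compare with v
    have hA1 : f v - f x ≤ R * dist y v ^ β + R * dist x y ^ β := by
      have h := hmaxy x hxA v hvA
      unfold pmseR at h
      rw [div_le_iff₀ (by linarith), mul_add, dist_comm y x] at h
      linarith
    have hkey : F y - f x ≤ R * dist x y ^ β := by linarith
    have t1 : (F y - f x) * dist y v ^ β ≤ R * dist x y ^ β * dist y v ^ β :=
      mul_le_mul_of_nonneg_right hkey hd2v.le
    have t2 : R * dist x y ^ β * dist y v ^ β = (f v - F y) * dist x y ^ β := by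
      rw [h1]; ring
    have hprod : (F y - f x) * (dist x y ^ β + dist y v ^ β) ≤ (f v - f x) * dist x y ^ β := by
      nlinarith [t1, t2]
    by_cases hxv : x = v
    · left
      rw [hFxx]
      have hfv : f v = f x := by rw [hxv]
      nlinarith [hprod, hc, hd1, hd2v]
    · right
      refine ⟨v, hvA, fun h => hxv h.symm, ?_⟩
      have hdxv : 0 < dist x v ^ β := Real.rpow_pos_of_pos (dist_pos.2 hxv) β
      have htri : dist x v ^ β ≤ dist x y ^ β + dist y v ^ β :=
        le_trans (Real.rpow_le_rpow dist_nonneg (dist_triangle x y v) hβ0.le)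
          (my_rpow_add_le dist_nonneg dist_nonneg hβ0.le hβ1)
      rw [hFxx, hFA v hvA, div_le_div_iff₀ hd1 hdxv]
      have e1 : |f x - F y| = F y - f x := by
        rw [abs_sub_comm]; exact abs_of_nonneg (by linarith)
      have e2 : f v - f x ≤ |f x - f v| := by
        rw [abs_sub_comm]; exact le_abs_self _
      rw [e1]
      linarith [mul_le_mul_of_nonneg_left htri (by linarith : (0:ℝ) ≤ F y - f x),
        mul_le_mul_of_nonneg_right e2 hd1.le, hprod]
  · -- F y ≤ f x : compare with u
    have hA2 : f x - f u ≤ R * dist x y ^ β + R * dist y u ^ β := by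
      have h := hmaxy u huA x hxA
      unfold pmseR at h
      rw [div_le_iff₀ (by linarith), mul_add, dist_comm y x] at h
      linarith
    have hkey : f x - F y ≤ R * dist x y ^ β := by linarith
    have t1 : (f x - F y) * dist y u ^ β ≤ R * dist x y ^ β * dist y u ^ β :=
      mul_le_mul_of_nonneg_right hkey hd2u.le
    have t2 : R * dist x y ^ β * dist y u ^ β = (F y - f u) * dist x y ^ β := by
      rw [h2]; ring
    have hprod : (f x - F y) * (dist x y ^ β + dist y u ^ β) ≤ (f x - f u) * dist x y ^ β := by
      nlinarith [t1, t2]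
    by_cases hxu : x = u
    · left
      rw [hFxx]
      have hfu : f u = f x := by rw [hxu]
      nlinarith [hprod, hc, hd1, hd2u]
    · right
      refine ⟨u, huA, fun h => hxu h.symm, ?_⟩
      have hdxu : 0 < dist x u ^ β := Real.rpow_pos_of_pos (dist_pos.2 hxu) β
      have htri : dist x u ^ β ≤ dist x y ^ β + dist y u ^ β :=
        le_trans (Real.rpow_le_rpow dist_nonneg (dist_triangle x y u) hβ0.le)
          (my_rpow_add_le dist_nonneg dist_nonneg hβ0.le hβ1)
      rw [hFxx, hFA u huA, div_le_div_iff₀ hd1 hdxu]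
      have e1 : |f x - F y| = f x - F y := abs_of_nonneg (by linarith)
      have e2 : f x - f u ≤ |f x - f u| := le_abs_self _
      rw [e1]
      linarith [mul_le_mul_of_nonneg_left htri (by linarith : (0:ℝ) ≤ f x - F y),
        mul_le_mul_of_nonneg_right e2 hd1.le, hprod]


/-- Claim III: on `A`, the full slope of the PMSE extension equals its
slope over `A` and is at most the slope of `f`. -/
theorem pmse_claim_three
    {Ω : Type*} [MetricSpace Ω] (β : ℝ) (hβ0 : 0 < β) (hβ1 : β ≤ 1)
    (A : Finset Ω) (hA : A.Nonempty)
    (f : Ω → ℝ) (hf : ∀ y, f y ∈ Icc (0:ℝ) 1)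
    (hne : ∃ u ∈ A, ∃ v ∈ A, f u ≠ f v)
    (ustar vstar : Ω → Ω)
    (hu : ∀ y, y ∉ A → ustar y ∈ A) (hv : ∀ y, y ∉ A → vstar y ∈ A)
    (hmax : ∀ y, y ∉ A → ∀ u ∈ A, ∀ v ∈ A, pmseR β f y u v ≤ pmseR β f y (ustar y) (vstar y))
    (F : Ω → ℝ)
    (hFA : ∀ a ∈ A, F a = f a)
    (hFx : ∀ y, y ∉ A →
      F y = f (ustar y) + pmseR β f y (ustar y) (vstar y) * dist y (ustar y) ^ β) :
    ∀ x ∈ A,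
      hslopeOn β F x Set.univ = hslopeOn β F x (A : Set Ω) ∧
      hslopeOn β F x (A : Set Ω) ≤ hslopeOn β f x Set.univ := by
  intro x hxA
  constructor
  · apply le_antisymm
    · simp only [hslopeOn]
      refine iSup_le fun y => iSup_le fun _ => iSup_le fun hyx => ?_
      by_cases hyA : y ∈ A
      · exact le_iSup_of_le y (le_iSup_of_le (Finset.mem_coe.2 hyA) (le_iSup_of_le hyx le_rfl))
      · rcases pmse_key hβ0 hβ1 hu hv hmax hFA hFx hxA hyA with heq | ⟨a, haA, hax, hle⟩
        · rw [heq, sub_self, abs_zero, zero_div, ENNReal.ofReal_zero]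
          exact zero_le
        · exact le_trans (ENNReal.ofReal_le_ofReal hle)
            (le_iSup_of_le a (le_iSup_of_le (Finset.mem_coe.2 haA) (le_iSup_of_le hax le_rfl)))
    · simp only [hslopeOn]
      exact iSup_le fun y => iSup_le fun hyA => iSup_le fun hyx =>
        le_iSup_of_le y (le_iSup_of_le (Set.mem_univ y) (le_iSup_of_le hyx le_rfl))
  · simp only [hslopeOn]
    refine iSup_le fun y => iSup_le fun hyA => iSup_le fun hyx => ?_
    rw [hFA x hxA, hFA y (Finset.mem_coe.1 hyA)]
    exact le_iSup_of_le y (le_iSup_of_le (Set.mem_univ y) (le_iSup_of_le hyx le_rfl))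

end
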